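/- For the stepset S₂ = {(-1,0,0),(1,-1,1),(1,0,1),(1,1,-1)} with stepset polynomial P = x^{-1} + xy^{-1}z + xz + xyz^{-1}, the associated birational maps φ_x, φ_y, φ_z satisfy (φ_x∘φ_y)² = id and (φ_x∘φ_z)² = id. -/

import Mathlib

open MvPolynomial

noncomputable section

/-- The field `ℚ(x,y,z)` of rational functions in three variables. -/
abbrev Fld : Type := FractionRing (MvPolynomial (Fin 3) ℚ)

/-- The variables `x = Xv 0`, `y = Xv 1`, `z = Xv 2` of `ℚ(x,y,z)`. -/
def Xv (i : Fin 3) : Fld := algebraMap (MvPolynomial (Fin 3) ℚ) Fld (X i)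

/-- For the stepset `S₂ = {(-1,0,0),(1,-1,1),(1,0,1),(1,1,-1)}` with stepset polynomial
`P = x⁻¹ + xy⁻¹z + xz + xyz⁻¹`: `A₋ = 1`, `A₊ = y⁻¹z + z + yz⁻¹`, so
`φ_x(x,y,z) = (x⁻¹·1/(y⁻¹z + z + yz⁻¹), y, z)`. -/
def phix : Fld × Fld × Fld → Fld × Fld × Fld := fun t =>
  (t.1⁻¹ * (1 / (t.2.1⁻¹ * t.2.2 + t.2.2 + t.2.1 * t.2.2⁻¹)), t.2.1, t.2.2)

/-- `B₋ = xz`, `B₊ = xz⁻¹`, so `φ_y(x,y,z) = (x, z²/y, z)`. -/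
def phiy : Fld × Fld × Fld → Fld × Fld × Fld := fun t =>
  (t.1, t.2.2 ^ 2 / t.2.1, t.2.2)

/-- `C₋ = xy`, `C₊ = x(y⁻¹+1)`, so `φ_z(x,y,z) = (x, y, z⁻¹·y/(y⁻¹+1))`. -/
def phiz : Fld × Fld × Fld → Fld × Fld × Fld := fun t =>
  (t.1, t.2.1, t.2.2⁻¹ * (t.2.1 / (t.2.1⁻¹ + 1)))


section Aux
variable {F : Type*} [Field F]

theorem mainxy (x y z : F) (hx : x ≠ 0) (hy : y ≠ 0) (hz : z ≠ 0)
    (h2 : z^2 + y*z^2 + y^2 ≠ 0) :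
    let f : F × F × F → F × F × F := fun t =>
      (t.1⁻¹ * (1 / (t.2.1⁻¹ * t.2.2 + t.2.2 + t.2.1 * t.2.2⁻¹)), t.2.1, t.2.2)
    let g : F × F × F → F × F × F := fun t => (t.1, t.2.2 ^ 2 / t.2.1, t.2.2)
    f (g (f (g (x, y, z)))) = (x, y, z) := by
  intro f g
  have hy' : z^2/y ≠ 0 := div_ne_zero (pow_ne_zero _ hz) hy
  have hA : y⁻¹ * z + z + y * z⁻¹ ≠ 0 := by
    have : y⁻¹ * z + z + y * z⁻¹ = (z^2 + y*z^2 + y^2) / (y*z) := by field_simp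
    rw [this]; exact div_ne_zero h2 (mul_ne_zero hy hz)
  have hA' : (z^2/y)⁻¹ * z + z + (z^2/y) * z⁻¹ ≠ 0 := by
    have : (z^2/y)⁻¹ * z + z + (z^2/y) * z⁻¹ = y⁻¹ * z + z + y * z⁻¹ := by
      field_simp; ring
    rw [this]; exact hA
  have hD : y * z ^ 5 + y ^ 2 * z ^ 5 + y ^ 3 * z ^ 3 ≠ 0 := by
    have : y * z ^ 5 + y ^ 2 * z ^ 5 + y ^ 3 * z ^ 3
        = (z^2 + y*z^2 + y^2) * (y * z^3) := by ring
    rw [this]; exact mul_ne_zero h2 (mul_ne_zero hy (pow_ne_zero _ hz))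
  simp only [f, g]
  refine Prod.ext ?_ (Prod.ext ?_ rfl)
  · field_simp
    linear_combination mul_inv_cancel₀ h2
  · field_simp


theorem mainxz (x y z : F) (hx : x ≠ 0) (hy : y ≠ 0) (hz : z ≠ 0)
    (h1 : (1:F) + y ≠ 0) (h2 : z^2 + y*z^2 + y^2 ≠ 0) :
    let f : F × F × F → F × F × F := fun t =>
      (t.1⁻¹ * (1 / (t.2.1⁻¹ * t.2.2 + t.2.2 + t.2.1 * t.2.2⁻¹)), t.2.1, t.2.2)
    let h : F × F × F → F × F × F := fun t =>
      (t.1, t.2.1, t.2.2⁻¹ * (t.2.1 / (t.2.1⁻¹ + 1)))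
    f (h (f (h (x, y, z)))) = (x, y, z) := by
  intro f h
  have hB : y⁻¹ + 1 ≠ 0 := by
    have : y⁻¹ + 1 = (1 + y) / y := by field_simp
    rw [this]; exact div_ne_zero h1 hy
  have hz' : z⁻¹ * (y / (y⁻¹ + 1)) ≠ 0 :=
    mul_ne_zero (inv_ne_zero hz) (div_ne_zero hy hB)
  set z' := z⁻¹ * (y / (y⁻¹ + 1)) with hz'def
  have hz'eq : z' = y^2 / (z * (1 + y)) := by
    rw [hz'def]; field_simp
  have hD2 : y^3*z^2 + y^4*z^2*2 + y^5*z^2 ≠ 0 := by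
    have : y^3*z^2 + y^4*z^2*2 + y^5*z^2 = y^3 * z^2 * (1+y)^2 := by ring
    rw [this]
    exact mul_ne_zero (mul_ne_zero (pow_ne_zero _ hy) (pow_ne_zero _ hz)) (pow_ne_zero _ h1)
  have hA' : y⁻¹ * z' + z' + y * z'⁻¹ ≠ 0 := by
    have : y⁻¹ * z' + z' + y * z'⁻¹ = (z^2 + y*z^2 + y^2) / (y*z) := by
      rw [hz'eq]; field_simp
      ring
    rw [this]; exact div_ne_zero h2 (mul_ne_zero hy hz)
  have hA : y⁻¹ * z + z + y * z⁻¹ ≠ 0 := by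
    have : y⁻¹ * z + z + y * z⁻¹ = (z^2 + y*z^2 + y^2) / (y*z) := by field_simp
    rw [this]; exact div_ne_zero h2 (mul_ne_zero hy hz)
  simp only [f, h]
  refine Prod.ext ?_ (Prod.ext rfl ?_)
  · have hD3 : y^2*z^3 + y^3*z^3*2 + y^4*z + y^4*z^3 + y^5*z ≠ 0 := by
      have : y^2*z^3 + y^3*z^3*2 + y^4*z + y^4*z^3 + y^5*z
          = y^2 * z * ((1+y) * (z^2 + y*z^2 + y^2)) := by ring
      rw [this]
      exact mul_ne_zero (mul_ne_zero (pow_ne_zero _ hy) hz) (mul_ne_zero h1 h2)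
    field_simp
    ring_nf
    linear_combination mul_inv_cancel₀ h2
  · field_simp

end Aux

lemma inj' : Function.Injective (algebraMap (MvPolynomial (Fin 3) ℚ) Fld) :=
  IsFractionRing.injective _ _

lemma Xv_ne (i : Fin 3) : Xv i ≠ 0 := by
  unfold Xv
  rw [map_ne_zero_iff _ inj']
  exact X_ne_zero i

lemma amap_ne (p : MvPolynomial (Fin 3) ℚ) (h : eval (fun _ => (1:ℚ)) p ≠ 0) :
    algebraMap (MvPolynomial (Fin 3) ℚ) Fld p ≠ 0 := by
  rw [map_ne_zero_iff _ inj']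
  intro hp; apply h; rw [hp]; simp

lemma key1 : (1 : Fld) + Xv 1 ≠ 0 := by
  have := amap_ne (1 + X 1) (by simp)
  simpa [Xv] using this

lemma key2 : (Xv 2) ^ 2 + Xv 1 * (Xv 2) ^ 2 + (Xv 1) ^ 2 ≠ 0 := by
  have := amap_ne (X 2 ^ 2 + X 1 * X 2 ^ 2 + X 1 ^ 2) (by simp; norm_num)
  simpa [Xv] using this

/-- For the model `S₂`, the birational maps satisfy `(φ_x∘φ_y)² = id` and
`(φ_x∘φ_z)² = id` (as birational transformations, i.e. at the generic point `(x,y,z)`). -/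
theorem stmt14 :
    phix (phiy (phix (phiy (Xv 0, Xv 1, Xv 2)))) = (Xv 0, Xv 1, Xv 2) ∧
    phix (phiz (phix (phiz (Xv 0, Xv 1, Xv 2)))) = (Xv 0, Xv 1, Xv 2) := by
  constructor
  · exact mainxy (Xv 0) (Xv 1) (Xv 2) (Xv_ne 0) (Xv_ne 1) (Xv_ne 2) key2
  · exact mainxz (Xv 0) (Xv 1) (Xv 2) (Xv_ne 0) (Xv_ne 1) (Xv_ne 2) key1 key2
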